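/- Let (H, w) be a weighted hereditary system, with H = (S, F). Then (H, w) is not greedy (i.e., not all maximal feasible sets have the same weight) if and only if there exist two maximal feasible sets S₁ and S₂ with w(S₁) ≠ w(S₂) such that for every a ∈ S₁ \ S₂ and every b ∈ S₂ \ S₁, the set (S₁ ∩ S₂) ∪ {a, b} is not feasible. -/

import Mathlib

open SimpleGraph Set

variable {V : Type*} [Fintype V] [DecidableEq V]

/-- `N_i(S)`: vertices whose minimum distance to the set `S` equals `i`. -/
def NSet (G : SimpleGraph V) (i : ℕ) (S : Set V) : Set V :=
  {u | (⨅ s ∈ S, G.edist s u) = (i : ℕ∞)}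

/-- `N_i(x)`: vertices at distance exactly `i` from `x`. -/
def Nv (G : SimpleGraph V) (i : ℕ) (x : V) : Set V := {u | G.edist x u = (i : ℕ∞)}

/-- `S` is an independent set of `G`. -/
def IsIndep (G : SimpleGraph V) (S : Set V) : Prop :=
  S.Pairwise fun u v => ¬ G.Adj u v

/-- `A` dominates `T`. -/
def Dominates (G : SimpleGraph V) (A T : Set V) : Prop :=
  T ⊆ A ∪ {u | ∃ a ∈ A, G.Adj a u}

/-- `S` is a maximal independent set of `G`. -/
def IsMaxIndep (G : SimpleGraph V) (S : Set V) : Prop :=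
  IsIndep G S ∧ ∀ T, IsIndep G T → S ⊆ T → T = S

/-- The induced subgraph on `X ∪ Y` is complete bipartite with parts `X`, `Y`. -/
def IsCompBipartite (G : SimpleGraph V) (X Y : Set V) : Prop :=
  X.Nonempty ∧ Y.Nonempty ∧ Disjoint X Y ∧ IsIndep G X ∧ IsIndep G Y ∧
    ∀ x ∈ X, ∀ y ∈ Y, G.Adj x y

/-- `B = (X, Y)` is a generating subgraph of `G`. -/
def Generating (G : SimpleGraph V) (X Y : Set V) : Prop :=
  IsCompBipartite G X Y ∧ ∃ S : Set V, IsIndep G S ∧ Disjoint S (X ∪ Y) ∧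
    IsMaxIndep G (S ∪ X) ∧ IsMaxIndep G (S ∪ Y)

/-- `G` contains a (not necessarily induced) cycle on `k` vertices. -/
def HasCycle (G : SimpleGraph V) (k : ℕ) : Prop :=
  ∃ f : ZMod k → V, Function.Injective f ∧ ∀ i, G.Adj (f i) (f (i + 1))

/-- Weight of a set of vertices. -/
noncomputable def wt (w : V → ℝ) (S : Set V) : ℝ := ∑ x ∈ S.toFinite.toFinset, w x

/-- `G` is `w`-well-covered. -/
def WWellCovered (G : SimpleGraph V) (w : V → ℝ) : Prop :=
  ∀ S T : Set V, IsMaxIndep G S → IsMaxIndep G T → wt w S = wt w T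

lemma exists_maximal_superset {α : Type*} [Fintype α] [DecidableEq α]
    (F : Set (Finset α)) {s : Finset α} (hs : s ∈ F) :
    ∃ m ∈ F, s ⊆ m ∧ ∀ g ∈ F, m ⊆ g → g = m := by
  have hfin : {g ∈ F | s ⊆ g}.Finite := Set.toFinite _
  obtain ⟨m, ⟨hmF, hsm⟩, hmax⟩ := hfin.exists_maximalFor (fun g => g.card) _
    ⟨s, hs, subset_rfl⟩
  refine ⟨m, hmF, hsm, fun g hg hmg => ?_⟩
  have : m.card = g.card := le_antisymm (Finset.card_le_card hmg) (hmax ⟨hg, hsm.trans hmg⟩ (Finset.card_le_card hmg))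
  exact (Finset.eq_of_subset_of_card_le hmg this.ge).symm

theorem hereditary_not_greedy_iff {α : Type*} [Fintype α] [DecidableEq α]
    (F : Set (Finset α)) (hF : ∀ f ∈ F, ∀ f' ⊆ f, f' ∈ F) (w : α → ℝ) :
    (¬ ∀ S₁ ∈ F, ∀ S₂ ∈ F, (∀ g ∈ F, S₁ ⊆ g → g = S₁) → (∀ g ∈ F, S₂ ⊆ g → g = S₂) →
        ∑ x ∈ S₁, w x = ∑ x ∈ S₂, w x) ↔
      ∃ S₁ ∈ F, ∃ S₂ ∈ F, (∀ g ∈ F, S₁ ⊆ g → g = S₁) ∧ (∀ g ∈ F, S₂ ⊆ g → g = S₂) ∧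
        ∑ x ∈ S₁, w x ≠ ∑ x ∈ S₂, w x ∧
        ∀ a ∈ S₁ \ S₂, ∀ b ∈ S₂ \ S₁, (S₁ ∩ S₂) ∪ {a, b} ∉ F := by
  constructor
  · intro h
    push_neg at h
    obtain ⟨A, hA, B, hB, hAm, hBm, hwAB⟩ := h
    set P : Set (Finset α × Finset α) :=
      {p | p.1 ∈ F ∧ p.2 ∈ F ∧ (∀ g ∈ F, p.1 ⊆ g → g = p.1) ∧
        (∀ g ∈ F, p.2 ⊆ g → g = p.2) ∧ ∑ x ∈ p.1, w x ≠ ∑ x ∈ p.2, w x} with hPdef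
    have hPfin : P.Finite := Set.toFinite _
    obtain ⟨⟨S₁, S₂⟩, hmem, hmax⟩ := hPfin.exists_maximalFor
      (fun p => (p.1 ∩ p.2).card) _ ⟨(A, B), hA, hB, hAm, hBm, hwAB⟩
    obtain ⟨h1, h2, m1, m2, hne⟩ := hmem
    refine ⟨S₁, h1, S₂, h2, m1, m2, hne, ?_⟩
    intro a ha b hb habF
    simp only [Finset.mem_sdiff] at ha hb
    obtain ⟨m, hmF, hsub, hmmax⟩ := exists_maximal_superset F habF
    have key : ∀ (T : Finset α) (c : α), T ∈ F → (∀ g ∈ F, T ⊆ g → g = T) →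
        S₁ ∩ S₂ ⊆ T → c ∈ T → c ∉ S₁ ∩ S₂ → c ∈ m →
        ∑ x ∈ T, w x = ∑ x ∈ m, w x := by
      intro T c hT hTmax hIT hcT hcI hcm
      by_contra hwne
      have hmemTm : (T, m) ∈ P := ⟨hT, hmF, hTmax, hmmax, hwne⟩
      have hins : insert c (S₁ ∩ S₂) ⊆ T ∩ m := by
        intro x hx
        rcases Finset.mem_insert.mp hx with rfl | hx
        · exact Finset.mem_inter.mpr ⟨hcT, hcm⟩
        · exact Finset.mem_inter.mpr ⟨hIT hx, hsub (Finset.mem_union_left _ hx)⟩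
      have hlt : (S₁ ∩ S₂).card < (T ∩ m).card := by
        calc (S₁ ∩ S₂).card < (insert c (S₁ ∩ S₂)).card := by
              rw [Finset.card_insert_of_notMem hcI]; omega
          _ ≤ (T ∩ m).card := Finset.card_le_card hins
      exact absurd (hmax hmemTm hlt.le) (not_le.mpr hlt)
    have ham : a ∈ m := hsub (Finset.mem_union_right _ (by simp))
    have hbm : b ∈ m := hsub (Finset.mem_union_right _ (by simp))
    have e1 := key S₁ a h1 m1 Finset.inter_subset_left ha.1
      (fun hx => ha.2 (Finset.mem_inter.mp hx).2) ham
    have e2 := key S₂ b h2 m2 Finset.inter_subset_right hb.1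
      (fun hx => hb.2 (Finset.mem_inter.mp hx).1) hbm
    exact hne (e1.trans e2.symm)
  · rintro ⟨S₁, h1, S₂, h2, m1, m2, hne, -⟩ h
    exact hne (h S₁ h1 S₂ h2 m1 m2)
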